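/- Let F be a fractal subset of [0,1] with complementary intervals (I_n), let 0 < s < 1, and suppose F is almost s-Minkowski measurable, i.e. there exist constants 0 < c ≤ C and r₀ > 0 such that c·r^{1−s} ≤ L(F_r) ≤ C·r^{1−s} for all 0 < r ≤ r₀, where L is Lebesgue measure and F_r is the closed r-neighbourhood of F. Then there exist constants 0 < c' ≤ C' such that c'·log N ≤ Σ_{n=1}^N |I_n|^s ≤ C'·log N for all N ≥ 2. -/

import Mathlib

open MeasureTheory Filter Set
open scoped Classical

set_option maxHeartbeats 1600000
noncomputable section

/-- The enlargement `B̄^a` of the interval `[s,t]` by the factor `1+a` about its centre. -/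
def enlarge (a s t : ℝ) : Set ℝ :=
  Set.Icc (s - a * (t - s) / 2) (t + a * (t - s) / 2)

/-- The moment sum `Σ_{B ∈ B_r^*} μ(B̄^a)^q` over grid intervals of length `r`
whose interior meets the support of `μ` (i.e. with `μ(B) > 0`). -/
def gridSum (μ : Measure ℝ) (a q R : ℝ) : ℝ :=
  ∑' m : ℤ, if 0 < μ (Set.Icc ((m : ℝ) * R) (((m : ℝ) + 1) * R))
    then (μ (enlarge a ((m : ℝ) * R) (((m : ℝ) + 1) * R))).toReal ^ q else 0

/-- The coarse multifractal moment function
`β_a(q) = inf{β : limsup_{r→0⁺} r^β Σ_{B ∈ B_r^*} μ(B̄^a)^q = 0}`.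
(For the nonnegative quantity `r^β · Σ…`, vanishing of the `limsup` as `r → 0⁺`
is the same as convergence to `0`.) -/
def betaA (μ : Measure ℝ) (a q : ℝ) : ℝ :=
  sInf {β : ℝ | Filter.Tendsto (fun R => R ^ β * gridSum μ a q R)
    (nhdsWithin 0 (Set.Ioi 0)) (nhds 0)}

/-- `F` is a "fractal subset" of `[0,1]`: compact, Lebesgue-null, containing `0` and `1`. -/
def IsFractalSubset (F : Set ℝ) : Prop :=
  IsCompact F ∧ F ⊆ Set.Icc 0 1 ∧ (0 : ℝ) ∈ F ∧ (1 : ℝ) ∈ F ∧ MeasureTheory.volume F = 0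

/-- The complementary intervals `I_n = (l n, r n)` of `F` in `[0,1]`, enumerated with
nonincreasing lengths. -/
structure FractalComplement (F : Set ℝ) where
  l : ℕ → ℝ
  r : ℕ → ℝ
  lt : ∀ n, l n < r n
  disj : Pairwise fun n m => Disjoint (Set.Ioo (l n) (r n)) (Set.Ioo (l m) (r m))
  union : (⋃ n, Set.Ioo (l n) (r n)) = Set.Icc (0 : ℝ) 1 \ F
  mono : ∀ n, r (n + 1) - l (n + 1) ≤ r n - l n

/-- The length `|I_n|` of the `n`-th complementary interval. -/
def FractalComplement.len {F : Set ℝ} (c : FractalComplement F) (n : ℕ) : ℝ := c.r n - c.l n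

/-- The enlargement `Ī_n^a` of the closure of the complementary interval `I_n`. -/
def FractalComplement.I {F : Set ℝ} (c : FractalComplement F) (a : ℝ) (n : ℕ) : Set ℝ :=
  enlarge a (c.l n) (c.r n)

/-- The lacunarity condition with constant `lam`: every interval `[x-r, x+r]` with `x ∈ F`
and `0 < r ≤ 1` contains a complementary interval of length at least `lam * r`. -/
def Lacunary {F : Set ℝ} (c : FractalComplement F) (lam : ℝ) : Prop :=
  ∀ x ∈ F, ∀ R : ℝ, 0 < R → R ≤ 1 → ∃ n,
    Set.Ioo (c.l n) (c.r n) ⊆ Set.Icc (x - R) (x + R) ∧ lam * R ≤ c.len n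

/-- The topological support of `μ` is exactly `F`. -/
def HasSupport (μ : Measure ℝ) (F : Set ℝ) : Prop :=
  μ Fᶜ = 0 ∧ ∀ x ∈ F, ∀ ε : ℝ, 0 < ε → 0 < μ (Set.Ioo (x - ε) (x + ε))


namespace Frac
section
variable {F : Set ℝ} (c : FractalComplement F)


variable {F : Set ℝ} (hF : IsFractalSubset F) (c : FractalComplement F)

lemma len_pos (n : ℕ) : 0 < c.len n := sub_pos.2 (c.lt n)

lemma len_anti : ∀ {m n : ℕ}, m ≤ n → c.len n ≤ c.len m := by
  intro m n h
  induction h with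
  | refl => exact le_refl _
  | step h ih => exact le_trans (c.mono _) ih

lemma Ioo_subset (n : ℕ) : Set.Ioo (c.l n) (c.r n) ⊆ Set.Icc (0:ℝ) 1 := by
  intro x hx
  have : x ∈ Set.Icc (0:ℝ) 1 \ F := c.union ▸ Set.mem_iUnion.2 ⟨n, hx⟩
  exact this.1

lemma l_nonneg (n : ℕ) : 0 ≤ c.l n := by
  by_contra h
  push_neg at h
  have hx : (c.l n + min 0 (c.r n)) / 2 ∈ Set.Ioo (c.l n) (c.r n) := by
    constructor
    · have : c.l n < min 0 (c.r n) := lt_min h (c.lt n)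
      linarith
    · have h1 : min 0 (c.r n) ≤ c.r n := min_le_right _ _
      have := c.lt n
      nlinarith [min_le_left (0:ℝ) (c.r n)]
  have := (Ioo_subset c n hx).1
  have h2 : min 0 (c.r n) ≤ 0 := min_le_left _ _
  linarith [hx.1, hx.2]

lemma r_le_one (n : ℕ) : c.r n ≤ 1 := by
  by_contra h
  push_neg at h
  have hx : (max 1 (c.l n) + c.r n) / 2 ∈ Set.Ioo (c.l n) (c.r n) := by
    constructor
    · have h1 : c.l n ≤ max 1 (c.l n) := le_max_right _ _
      have := c.lt n
      nlinarith [max_lt h (c.lt n)]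
    · have : max 1 (c.l n) < c.r n := max_lt h (c.lt n)
      linarith
  have := (Ioo_subset c n hx).2
  have h2 : (1:ℝ) ≤ max 1 (c.l n) := le_max_left _ _
  linarith [hx.1, hx.2]

lemma l_mem (n : ℕ) : c.l n ∈ F := by
  by_contra h
  have hmem : c.l n ∈ Set.Icc (0:ℝ) 1 \ F := by
    refine ⟨⟨l_nonneg c n, le_trans (le_of_lt (c.lt n)) (r_le_one c n)⟩, h⟩
  rw [← c.union] at hmem
  obtain ⟨m, hm⟩ := Set.mem_iUnion.1 hmem
  have hmn : m ≠ n := by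
    intro e; subst e; exact lt_irrefl _ hm.1
  set x := (c.l n + min (c.r n) (c.r m)) / 2 with hxdef
  have hlt : c.l n < min (c.r n) (c.r m) := lt_min (c.lt n) hm.2
  have hxn : x ∈ Set.Ioo (c.l n) (c.r n) := by
    constructor
    · simp only [hxdef]; linarith
    · have := min_le_left (c.r n) (c.r m); simp only [hxdef]; linarith
  have hxm : x ∈ Set.Ioo (c.l m) (c.r m) := by
    constructor
    · have := hm.1; simp only [hxdef]; linarith
    · have := min_le_right (c.r n) (c.r m); simp only [hxdef]; linarith
  exact Set.disjoint_left.1 (c.disj hmn) hxm hxn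

lemma r_mem (n : ℕ) : c.r n ∈ F := by
  by_contra h
  have hmem : c.r n ∈ Set.Icc (0:ℝ) 1 \ F := by
    refine ⟨⟨le_trans (l_nonneg c n) (le_of_lt (c.lt n)), r_le_one c n⟩, h⟩
  rw [← c.union] at hmem
  obtain ⟨m, hm⟩ := Set.mem_iUnion.1 hmem
  have hmn : m ≠ n := by
    intro e; subst e; exact lt_irrefl _ hm.2
  set x := (max (c.l n) (c.l m) + c.r n) / 2 with hxdef
  have hlt : max (c.l n) (c.l m) < c.r n := max_lt (c.lt n) hm.1
  have hxn : x ∈ Set.Ioo (c.l n) (c.r n) := by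
    constructor
    · have := le_max_left (c.l n) (c.l m); simp only [hxdef]; linarith
    · simp only [hxdef]; linarith
  have hxm : x ∈ Set.Ioo (c.l m) (c.r m) := by
    constructor
    · have := le_max_right (c.l n) (c.l m); simp only [hxdef]; linarith
    · have := hm.2; simp only [hxdef]; linarith
  exact Set.disjoint_left.1 (c.disj hmn) hxm hxn

lemma sum_len_le_one (t : Finset ℕ) : ∑ n ∈ t, c.len n ≤ 1 := by
  have hd : (t : Set ℕ).Pairwise fun n m => Disjoint (Set.Ioo (c.l n) (c.r n)) (Set.Ioo (c.l m) (c.r m)) :=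
    fun a _ b _ hab => c.disj hab
  have hmeas : volume (⋃ n ∈ t, Set.Ioo (c.l n) (c.r n)) = ∑ n ∈ t, volume (Set.Ioo (c.l n) (c.r n)) :=
    measure_biUnion_finset hd (fun n _ => measurableSet_Ioo)
  have hsub : (⋃ n ∈ t, Set.Ioo (c.l n) (c.r n)) ⊆ Set.Icc (0:ℝ) 1 := by
    refine Set.iUnion₂_subset fun n _ => Ioo_subset c n
  have hle : (∑ n ∈ t, volume (Set.Ioo (c.l n) (c.r n))) ≤ 1 := by
    rw [← hmeas]
    calc volume (⋃ n ∈ t, Set.Ioo (c.l n) (c.r n)) ≤ volume (Set.Icc (0:ℝ) 1) :=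
      measure_mono hsub
    _ = 1 := by simp
  have : ∑ n ∈ t, ENNReal.ofReal (c.len n) ≤ 1 := by
    simpa [Real.volume_Ioo, FractalComplement.len] using hle
  have h2 : ENNReal.ofReal (∑ n ∈ t, c.len n) ≤ ENNReal.ofReal 1 := by
    rw [ENNReal.ofReal_sum_of_nonneg (fun n _ => (len_pos c n).le)]
    simpa using this
  exact (ENNReal.ofReal_le_ofReal_iff (by norm_num)).1 h2

lemma summable_len : Summable c.len :=
  summable_of_sum_range_le (fun n => (len_pos c n).le) (fun n => sum_len_le_one c _)


end
lemma vol_cthick_ne_top {F : Set ℝ} (hF : IsFractalSubset F) (R : ℝ) : volume (Metric.cthickening R F) ≠ ⊤ := by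
  have hb : Bornology.IsBounded (Metric.cthickening R F) := by
    have : Bornology.IsBounded F := (Metric.isBounded_Icc (0:ℝ) 1).subset hF.2.1
    exact this.cthickening
  exact hb.measure_lt_top.ne

lemma geomA {F : Set ℝ} (hF : IsFractalSubset F) (c : FractalComplement F) (R : ℝ) (hR : 0 < R) (t : Finset ℕ) :
    ∑ n ∈ t, min (c.len n) (2*R) ≤ (volume (Metric.cthickening R F)).toReal := by
  set J : ℕ → Set ℝ := fun n =>
    if c.len n ≤ 2*R then Set.Ioo (c.l n) (c.r n)
    else Set.Ioo (c.l n) (c.l n + R) ∪ Set.Ioo (c.r n - R) (c.r n) with hJ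
  have hJsub : ∀ n, J n ⊆ Set.Ioo (c.l n) (c.r n) := by
    intro n
    simp only [hJ]
    split_ifs with h
    · exact subset_rfl
    · push_neg at h
      simp only [FractalComplement.len] at h
      intro x hx
      rcases hx with hx | hx
      · exact ⟨hx.1, by linarith [hx.2, hR]⟩
      · exact ⟨by linarith [hx.1, hR], hx.2⟩
  have hJthick : ∀ n, J n ⊆ Metric.cthickening R F := by
    intro n
    simp only [hJ]
    split_ifs with h
    · intro x hx
      rcases le_or_gt x ((c.l n + c.r n)/2) with hc | hc
      · have : x ∈ Metric.closedBall (c.l n) R := by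
          rw [Real.closedBall_eq_Icc]
          constructor <;> simp only [FractalComplement.len] at h <;> linarith [hx.1, hx.2]
        exact Metric.closedBall_subset_cthickening (l_mem c n) R this
      · have : x ∈ Metric.closedBall (c.r n) R := by
          rw [Real.closedBall_eq_Icc]
          constructor <;> simp only [FractalComplement.len] at h <;> linarith [hx.1, hx.2]
        exact Metric.closedBall_subset_cthickening (r_mem c n) R this
    · intro x hx
      rcases hx with hx | hx
      · have : x ∈ Metric.closedBall (c.l n) R := by
          rw [Real.closedBall_eq_Icc]
          constructor <;> linarith [hx.1, hx.2, hR]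
        exact Metric.closedBall_subset_cthickening (l_mem c n) R this
      · have : x ∈ Metric.closedBall (c.r n) R := by
          rw [Real.closedBall_eq_Icc]
          constructor <;> linarith [hx.1, hx.2, hR]
        exact Metric.closedBall_subset_cthickening (r_mem c n) R this
  have hJvol : ∀ n, ENNReal.ofReal (min (c.len n) (2*R)) ≤ volume (J n) := by
    intro n
    simp only [hJ]
    split_ifs with h
    · rw [min_eq_left h, Real.volume_Ioo]; simp [FractalComplement.len]
    · push_neg at h
      have h2 : c.l n + R ≤ c.r n - R := by simp only [FractalComplement.len] at h; linarith
      have hdisj : Disjoint (Set.Ioo (c.l n) (c.l n + R)) (Set.Ioo (c.r n - R) (c.r n)) := by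
        apply Set.disjoint_left.2
        intro x hx1 hx2
        linarith [hx1.2, hx2.1]
      rw [min_eq_right h.le, measure_union hdisj measurableSet_Ioo,
        Real.volume_Ioo, Real.volume_Ioo]
      rw [← ENNReal.ofReal_add (by linarith) (by linarith)]
      apply ENNReal.ofReal_le_ofReal
      ring_nf
      linarith
  have hJmeas : ∀ n, MeasurableSet (J n) := by
    intro n
    simp only [hJ]
    split_ifs
    · exact measurableSet_Ioo
    · exact (measurableSet_Ioo).union measurableSet_Ioo
  have hpd : (t : Set ℕ).PairwiseDisjoint J := by
    intro a _ b _ hab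
    exact Set.disjoint_of_subset (hJsub a) (hJsub b) (c.disj hab)
  have key : ENNReal.ofReal (∑ n ∈ t, min (c.len n) (2*R)) ≤ volume (Metric.cthickening R F) := by
    rw [ENNReal.ofReal_sum_of_nonneg (fun n _ => le_min (len_pos c n).le (by linarith))]
    calc ∑ n ∈ t, ENNReal.ofReal (min (c.len n) (2*R)) ≤ ∑ n ∈ t, volume (J n) :=
          Finset.sum_le_sum (fun n _ => hJvol n)
      _ = volume (⋃ n ∈ t, J n) := (measure_biUnion_finset hpd (fun n _ => hJmeas n)).symm
      _ ≤ volume (Metric.cthickening R F) :=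
          measure_mono (Set.iUnion₂_subset fun n _ => hJthick n)
  exact (ENNReal.ofReal_le_iff_le_toReal (vol_cthick_ne_top hF R)).1 key

lemma summable_min {F : Set ℝ} (c : FractalComplement F) (R : ℝ) (hR : 0 < R) : Summable (fun n => min (c.len n) (2*R)) :=
  Summable.of_nonneg_of_le (fun n => le_min (len_pos c n).le (by linarith))
    (fun n => min_le_left _ _) (summable_len c)

lemma geomB {F : Set ℝ} (hF : IsFractalSubset F) (c : FractalComplement F) (R : ℝ) (hR : 0 < R) :
    (volume (Metric.cthickening R F)).toReal ≤ 2*R + ∑' n, min (c.len n) (2*R) := by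
  set K : ℕ → Set ℝ := fun n =>
    Set.Icc (c.l n) (min (c.l n + R) (c.r n)) ∪ Set.Icc (max (c.r n - R) (c.l n)) (c.r n) with hK
  have hcover : Metric.cthickening R F ⊆
      (Set.Icc (-R) 0 ∪ Set.Icc 1 (1+R) ∪ F) ∪ ⋃ n, K n := by
    intro x hx
    rw [hF.1.cthickening_eq_biUnion_closedBall hR.le] at hx
    obtain ⟨y, hyF, hxy⟩ := Set.mem_iUnion₂.1 hx
    rw [Metric.mem_closedBall, Real.dist_eq, abs_le] at hxy
    have hy0 : 0 ≤ y := (hF.2.1 hyF).1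
    have hy1 : y ≤ 1 := (hF.2.1 hyF).2
    rcases lt_or_ge x 0 with hx0 | hx0
    · exact Or.inl (Or.inl (Or.inl ⟨by linarith [hxy.1], hx0.le⟩))
    rcases lt_or_ge 1 x with hx1 | hx1
    · exact Or.inl (Or.inl (Or.inr ⟨hx1.le, by linarith [hxy.2]⟩))
    by_cases hxF : x ∈ F
    · exact Or.inl (Or.inr hxF)
    have : x ∈ Set.Icc (0:ℝ) 1 \ F := ⟨⟨hx0, hx1⟩, hxF⟩
    rw [← c.union] at this
    obtain ⟨n, hn⟩ := Set.mem_iUnion.1 this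
    have hynot : y ∉ Set.Ioo (c.l n) (c.r n) := by
      intro hy
      exact ((c.union ▸ Set.mem_iUnion.2 ⟨n, hy⟩ : y ∈ Set.Icc (0:ℝ) 1 \ F).2) hyF
    refine Or.inr (Set.mem_iUnion.2 ⟨n, ?_⟩)
    simp only [Set.mem_Ioo, not_and, not_lt] at hynot
    rcases lt_or_ge (c.l n) y with hyl | hyl
    · -- y ≥ c.r n
      have hyr : c.r n ≤ y := hynot hyl
      exact Or.inr ⟨max_le (by linarith [hxy.2]) hn.1.le, hn.2.le⟩
    · -- y ≤ c.l n
      refine Or.inl ⟨hn.1.le, le_min (by linarith [hxy.1]) hn.2.le⟩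
  have hKvol : ∀ n, volume (K n) ≤ ENNReal.ofReal (min (c.len n) (2*R)) := by
    intro n
    rcases le_or_gt (c.len n) (2*R) with h | h
    · have hsub : K n ⊆ Set.Icc (c.l n) (c.r n) := by
        apply Set.union_subset
        · exact Set.Icc_subset_Icc le_rfl (min_le_right _ _)
        · exact Set.Icc_subset_Icc (le_max_right _ _) le_rfl
      calc volume (K n) ≤ volume (Set.Icc (c.l n) (c.r n)) := measure_mono hsub
        _ = ENNReal.ofReal (c.len n) := by rw [Real.volume_Icc]; rfl
        _ = ENNReal.ofReal (min (c.len n) (2*R)) := by rw [min_eq_left h]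
    · calc volume (K n) ≤ volume (Set.Icc (c.l n) (min (c.l n + R) (c.r n)))
            + volume (Set.Icc (max (c.r n - R) (c.l n)) (c.r n)) := measure_union_le _ _
        _ ≤ ENNReal.ofReal R + ENNReal.ofReal R := by
            rw [Real.volume_Icc, Real.volume_Icc]
            gcongr
            · have := min_le_left (c.l n + R) (c.r n); linarith
            · have := le_max_left (c.r n - R) (c.l n); linarith
        _ = ENNReal.ofReal (min (c.len n) (2*R)) := by
            rw [← ENNReal.ofReal_add hR.le hR.le, min_eq_right h.le]
            congr 1; ring
  have hsum : ∑' n, volume (K n) ≤ ENNReal.ofReal (∑' n, min (c.len n) (2*R)) := by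
    rw [ENNReal.ofReal_tsum_of_nonneg (fun n => le_min (len_pos c n).le (by linarith))
      (summable_min c R hR)]
    exact ENNReal.tsum_le_tsum hKvol
  have key : volume (Metric.cthickening R F) ≤
      ENNReal.ofReal (2*R + ∑' n, min (c.len n) (2*R)) := by
    calc volume (Metric.cthickening R F)
        ≤ volume ((Set.Icc (-R) 0 ∪ Set.Icc 1 (1+R) ∪ F)) + volume (⋃ n, K n) :=
          le_trans (measure_mono hcover) (measure_union_le _ _)
      _ ≤ (volume (Set.Icc (-R) 0 ∪ Set.Icc 1 (1+R)) + volume F) + ∑' n, volume (K n) := by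
          gcongr
          · exact measure_union_le _ _
          · exact measure_iUnion_le _
      _ ≤ ((volume (Set.Icc (-R) 0) + volume (Set.Icc 1 (1+R))) + 0)
            + ENNReal.ofReal (∑' n, min (c.len n) (2*R)) := by
          gcongr
          · exact measure_union_le _ _
          · exact le_of_eq hF.2.2.2.2
      _ ≤ ENNReal.ofReal (2*R + ∑' n, min (c.len n) (2*R)) := by
          rw [Real.volume_Icc, Real.volume_Icc, add_zero]
          rw [ENNReal.ofReal_add (by linarith) (tsum_nonneg (fun n => le_min (len_pos c n).le (by linarith)))]
          gcongr
          rw [← ENNReal.ofReal_add (by linarith) (by linarith)]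
          apply ENNReal.ofReal_le_ofReal
          ring_nf
          linarith
  refine ENNReal.toReal_le_of_le_ofReal ?_ key
  have : (0:ℝ) ≤ ∑' n, min (c.len n) (2*R) := tsum_nonneg (fun n => le_min (len_pos c n).le (by linarith))
  linarith

end Frac

structure Ctx where
  F : Set ℝ
  len : ℕ → ℝ
  len_pos : ∀ n, 0 < len n
  len_anti : ∀ {m n : ℕ}, m ≤ n → len n ≤ len m
  sum_len_le_one : ∀ t : Finset ℕ, ∑ n ∈ t, len n ≤ 1
  summable_len : Summable len
  s : ℝ
  hs0 : 0 < s
  hs1 : s < 1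
  cm : ℝ
  CM : ℝ
  r₀ : ℝ
  hcm : 0 < cm
  hCM : 0 < CM
  hr₀ : 0 < r₀
  minkU : ∀ R : ℝ, 0 < R → R ≤ r₀ →
    (MeasureTheory.volume (Metric.cthickening R F)).toReal ≤ CM * R ^ (1 - s)
  minkL : ∀ R : ℝ, 0 < R → R ≤ r₀ →
    cm * R ^ (1 - s) ≤ (MeasureTheory.volume (Metric.cthickening R F)).toReal
  geomA : ∀ (R : ℝ), 0 < R → ∀ (t : Finset ℕ),
    ∑ n ∈ t, min (len n) (2*R) ≤ (MeasureTheory.volume (Metric.cthickening R F)).toReal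
  geomB : ∀ (R : ℝ), 0 < R →
    (MeasureTheory.volume (Metric.cthickening R F)).toReal ≤ 2*R + ∑' n, min (len n) (2*R)
  summable_min : ∀ (R : ℝ), 0 < R → Summable (fun n => min (len n) (2*R))

namespace Ctx

variable (C : Ctx)

def D : ℝ := max (C.CM * 2 ^ (C.s-1)) ((2*C.r₀) ^ (C.s-1))

lemma hD : 0 < C.D := lt_max_of_lt_left (mul_pos C.hCM (Real.rpow_pos_of_pos two_pos _))

lemma P1 (N : ℕ) : ((N:ℝ)+1) * C.len N ≤ 1 := by
  have h : ∀ n ∈ Finset.range (N+1), C.len N ≤ C.len n :=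
    fun n hn => C.len_anti (Nat.lt_succ_iff.1 (Finset.mem_range.1 hn))
  calc ((N:ℝ)+1) * C.len N = ∑ _n ∈ Finset.range (N+1), C.len N := by
        rw [Finset.sum_const, Finset.card_range, nsmul_eq_mul]; push_cast; ring
    _ ≤ ∑ n ∈ Finset.range (N+1), C.len n := Finset.sum_le_sum h
    _ ≤ 1 := C.sum_len_le_one _

lemma len_le_one (N : ℕ) : C.len N ≤ 1 := by
  have := C.P1 N
  have h1 : (1:ℝ) ≤ (N:ℝ)+1 := by linarith [Nat.cast_nonneg (α:=ℝ) N]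
  nlinarith [C.len_pos N]

lemma P2 (N : ℕ) : ((N:ℝ)+1) * (C.len N) ^ C.s ≤ C.D := by
  set a := C.len N with ha
  have hap : 0 < a := C.len_pos N
  rcases le_or_gt a (2*C.r₀) with hc | hc
  · -- use Minkowski at R = a/2
    have hR : (0:ℝ) < a/2 := by linarith
    have hRr : a/2 ≤ C.r₀ := by linarith
    have h1 : ∑ n ∈ Finset.range (N+1), min (C.len n) (2*(a/2))
        ≤ C.CM * (a/2) ^ (1-C.s) := (C.geomA (a/2) hR _).trans (C.minkU _ hR hRr)
    have h2 : ∑ n ∈ Finset.range (N+1), min (C.len n) (2*(a/2)) = ((N:ℝ)+1) * a := by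
      rw [show 2*(a/2) = a by ring]
      rw [Finset.sum_congr rfl (fun n hn => min_eq_right
        (C.len_anti (Nat.lt_succ_iff.1 (Finset.mem_range.1 hn))))]
      rw [Finset.sum_const, Finset.card_range, nsmul_eq_mul]; push_cast; ring
    rw [h2] at h1
    -- (a/2)^(1-C.s) = a^(1-C.s) * 2^(C.s-1)
    have e1 : (a/2 : ℝ) ^ (1-C.s) = a ^ (1-C.s) * 2 ^ (C.s-1) := by
      rw [Real.div_rpow hap.le two_pos.le, show (C.s-1) = -(1-C.s) by ring,
        Real.rpow_neg two_pos.le, div_eq_mul_inv]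
    have e2 : a ^ C.s * a ^ (1-C.s) = a := by
      rw [← Real.rpow_add hap]; norm_num
    have h3 : ((N:ℝ)+1) * (a ^ C.s * a ^ (1-C.s)) ≤ C.CM * 2^(C.s-1) * a^(1-C.s) := by
      rw [e2]; rw [e1] at h1; linarith
    have h4 : ((N:ℝ)+1) * a ^ C.s ≤ C.CM * 2^(C.s-1) := by
      have hpos : (0:ℝ) < a ^ (1-C.s) := Real.rpow_pos_of_pos hap _
      exact (mul_le_mul_iff_of_pos_right hpos).1 (by rw [mul_assoc]; exact h3)
    exact h4.trans (le_max_left _ _)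
  · -- a > 2r₀
    have h1 : ((N:ℝ)+1) * a ≤ 1 := C.P1 N
    have e2 : a ^ C.s = a * a ^ (C.s-1) := by
      conv_lhs => rw [show C.s = 1 + (C.s-1) by ring]
      rw [Real.rpow_add hap, Real.rpow_one]
    have h2 : ((N:ℝ)+1) * a ^ C.s ≤ a ^ (C.s-1) := by
      rw [e2]
      calc ((N:ℝ)+1) * (a * a^(C.s-1)) = (((N:ℝ)+1) * a) * a^(C.s-1) := by ring
        _ ≤ 1 * a^(C.s-1) := by
            apply mul_le_mul_of_nonneg_right h1 (Real.rpow_nonneg hap.le _)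
        _ = a ^ (C.s-1) := one_mul _
    have h3 : a ^ (C.s-1) ≤ (2*C.r₀) ^ (C.s-1) :=
      Real.rpow_le_rpow_of_nonpos (by linarith [C.hr₀]) hc.le (by linarith [C.hs1])
    exact (h2.trans h3).trans (le_max_right _ _)

lemma len_pow_le (N : ℕ) : (C.len N) ^ C.s ≤ C.D / ((N:ℝ)+1) := by
  have h := C.P2 N
  have hpos : (0:ℝ) < (N:ℝ)+1 := by positivity
  rw [le_div_iff₀ hpos]; linarith [C.P2 N]

lemma len_le (N : ℕ) : C.len N ≤ C.D ^ (1/C.s) / ((N:ℝ)+1) ^ (1/C.s) := by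
  have hpos : (0:ℝ) < (N:ℝ)+1 := by positivity
  have h1 : ((C.len N) ^ C.s) ^ (1/C.s) ≤ (C.D / ((N:ℝ)+1)) ^ (1/C.s) :=
    Real.rpow_le_rpow (Real.rpow_nonneg (C.len_pos N).le _) (C.len_pow_le N)
      (le_of_lt (div_pos one_pos C.hs0))
  rw [← Real.rpow_mul (C.len_pos N).le, mul_one_div, div_self C.hs0.ne', Real.rpow_one,
    Real.div_rpow C.hD.le hpos.le] at h1
  exact h1

lemma tail_tsum (N : ℕ) (h : C.len N ≤ 2*C.r₀) :
    ∑' n, C.len (n + N) ≤ C.CM * (C.len N / 2) ^ (1-C.s) := by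
  have hR : (0:ℝ) < C.len N / 2 := by linarith [C.len_pos N]
  have hRr : C.len N / 2 ≤ C.r₀ := by linarith
  apply Summable.tsum_le_of_sum_range_le ((summable_nat_add_iff N).2 C.summable_len)
  intro m
  have key : ∑ n ∈ Finset.Ico N (N+m), C.len n ≤ C.CM * (C.len N / 2) ^ (1-C.s) := by
    refine le_trans ?_ ((C.geomA _ hR (Finset.Ico N (N+m))).trans (C.minkU _ hR hRr))
    apply Finset.sum_le_sum
    intro n hn
    have : C.len n ≤ C.len N := C.len_anti (Finset.mem_Ico.1 hn).1
    rw [show 2*(C.len N/2) = C.len N by ring]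
    exact le_min le_rfl this
  calc ∑ n ∈ Finset.range m, C.len (n + N) = ∑ n ∈ Finset.Ico N (N+m), C.len n := by
        rw [Finset.sum_Ico_eq_sum_range]
        simp [add_comm]
    _ ≤ C.CM * (C.len N / 2) ^ (1-C.s) := key

def gam : ℝ := (1-C.s)/C.s

lemma hgam : 0 < C.gam := div_pos (by linarith [C.hs1]) C.hs0

def C₂ : ℝ := C.CM * (C.D^(1/C.s)/2) ^ (1-C.s)

lemma hC₂ : 0 < C.C₂ := mul_pos C.hCM (Real.rpow_pos_of_pos
  (div_pos (Real.rpow_pos_of_pos C.hD _) two_pos) _)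

lemma tail2 (N : ℕ) (h : C.len N ≤ 2*C.r₀) :
    ∑' n, C.len (n + N) ≤ C.C₂ * ((N:ℝ)+1) ^ (-C.gam) := by
  have hA : (0:ℝ) < (N:ℝ)+1 := by positivity
  refine (C.tail_tsum N h).trans ?_
  have h1 : C.len N / 2 ≤ (C.D^(1/C.s) * ((N:ℝ)+1)^(-(1/C.s))) / 2 := by
    have := C.len_le N
    rw [Real.rpow_neg hA.le, ← div_eq_mul_inv]
    linarith
  have h2 : (C.len N / 2) ^ (1-C.s) ≤ ((C.D^(1/C.s) * ((N:ℝ)+1)^(-(1/C.s))) / 2) ^ (1-C.s) :=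
    Real.rpow_le_rpow (by linarith [C.len_pos N]) h1 (by linarith [C.hs1])
  refine (mul_le_mul_of_nonneg_left h2 C.hCM.le).trans (le_of_eq ?_)
  have e1 : (C.D^(1/C.s) * ((N:ℝ)+1)^(-(1/C.s))) / 2 = (C.D^(1/C.s)/2) * ((N:ℝ)+1)^(-(1/C.s)) := by ring
  rw [e1, Real.mul_rpow (div_nonneg (Real.rpow_nonneg C.hD.le _) two_pos.le) (Real.rpow_nonneg hA.le _),
    ← Real.rpow_mul hA.le]
  rw [show (-(1/C.s)) * (1-C.s) = -C.gam by unfold Ctx.gam; field_simp]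
  unfold Ctx.C₂; ring

def η : ℝ := min C.r₀ ((C.cm/8) ^ (1/C.s))

lemma hη0 : 0 < C.η := lt_min C.hr₀ (Real.rpow_pos_of_pos (by linarith [C.hcm]) _)

lemma hηr : C.η ≤ C.r₀ := min_le_left _ _

lemma hηs : C.η ^ C.s ≤ C.cm/8 := by
  have h1 : C.η ^ C.s ≤ ((C.cm/8) ^ (1/C.s)) ^ C.s :=
    Real.rpow_le_rpow C.hη0.le (min_le_right _ _) C.hs0.le
  rwa [← Real.rpow_mul (by linarith [C.hcm] : (0:ℝ) ≤ C.cm/8), one_div,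
    inv_mul_cancel₀ C.hs0.ne', Real.rpow_one] at h1

def K : ℕ := max 2 (⌈(4*C.C₂/(C.cm * C.η^(1-C.s))) ^ (1/C.gam)⌉₊ + 1)

lemma hK2 : 2 ≤ C.K := le_max_left _ _

lemma hKbound : C.C₂ * (C.K:ℝ)^(-C.gam) ≤ C.cm * C.η^(1-C.s)/4 := by
  set W : ℝ := 4*C.C₂/(C.cm * C.η^(1-C.s)) with hW
  have hWpos : 0 < W := by
    apply div_pos (by linarith [C.hC₂])
    exact mul_pos C.hcm (Real.rpow_pos_of_pos C.hη0 _)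
  have hKW : W ^ (1/C.gam) ≤ (C.K:ℝ) := by
    have h1 : (⌈W ^ (1/C.gam)⌉₊ + 1 : ℕ) ≤ C.K := le_max_right _ _
    have h2 : W ^ (1/C.gam) ≤ (⌈W ^ (1/C.gam)⌉₊ : ℝ) := Nat.le_ceil _
    calc W ^ (1/C.gam) ≤ (⌈W ^ (1/C.gam)⌉₊ : ℝ) := h2
      _ ≤ ((⌈W ^ (1/C.gam)⌉₊ + 1 : ℕ) : ℝ) := by push_cast; linarith
      _ ≤ (C.K:ℝ) := Nat.cast_le.2 h1
  have hKgam : W ≤ (C.K:ℝ) ^ C.gam := by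
    have h1 : (W ^ (1/C.gam)) ^ C.gam ≤ (C.K:ℝ) ^ C.gam :=
      Real.rpow_le_rpow (Real.rpow_nonneg hWpos.le _) hKW C.hgam.le
    rwa [← Real.rpow_mul hWpos.le, one_div, inv_mul_cancel₀ C.hgam.ne',
      Real.rpow_one] at h1
  have hKpos : (0:ℝ) < (C.K:ℝ) ^ C.gam := Real.rpow_pos_of_pos (by
    have : (2:ℕ) ≤ C.K := C.hK2
    exact_mod_cast lt_of_lt_of_le two_pos (by exact_mod_cast this : (2:ℝ) ≤ (C.K:ℝ))) _
  have hinv : ((C.K:ℝ)^C.gam)⁻¹ ≤ W⁻¹ := inv_anti₀ hWpos hKgam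
  have hKneg : (C.K:ℝ)^(-C.gam) = ((C.K:ℝ)^C.gam)⁻¹ := by
    rw [Real.rpow_neg (by positivity)]
  rw [hKneg]
  calc C.C₂ * ((C.K:ℝ)^C.gam)⁻¹ ≤ C.C₂ * W⁻¹ := by
        apply mul_le_mul_of_nonneg_left hinv C.hC₂.le
    _ = C.cm * C.η^(1-C.s)/4 := by
        have h4 : C.C₂ ≠ 0 := C.hC₂.ne'
        rw [hW]
        field_simp

def M₀ : ℕ := ⌈(2*C.r₀)⁻¹⌉₊ + 1

lemma hM₀len (N : ℕ) (h : C.M₀ ≤ N) : C.len N ≤ 2*C.r₀ := by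
  have h1 : ((N:ℝ)+1) * C.len N ≤ 1 := C.P1 N
  have h2 : (2*C.r₀)⁻¹ ≤ (N:ℝ)+1 := by
    calc (2*C.r₀)⁻¹ ≤ (⌈(2*C.r₀)⁻¹⌉₊ : ℝ) := Nat.le_ceil _
      _ ≤ (N:ℝ) := by exact_mod_cast le_trans (by unfold Ctx.M₀; omega : ⌈(2*C.r₀)⁻¹⌉₊ ≤ C.M₀) h
      _ ≤ (N:ℝ)+1 := by linarith
  have hNpos : (0:ℝ) < (N:ℝ)+1 := by positivity
  have hinv : (0:ℝ) < (2*C.r₀)⁻¹ := inv_pos.2 (by linarith [C.hr₀])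
  have h3 : C.len N ≤ ((N:ℝ)+1)⁻¹ := by
    rw [← le_div_iff₀' hNpos, one_div] at h1
    exact h1
  calc C.len N ≤ ((N:ℝ)+1)⁻¹ := h3
    _ ≤ ((2*C.r₀)⁻¹)⁻¹ := by
        apply inv_anti₀ hinv h2
    _ = 2*C.r₀ := inv_inv _

lemma min_le_rpow (a b : ℝ) (ha : 0 < a) (hb : 0 < b) : min a b ≤ a^C.s * b^(1-C.s) := by
  have hm : 0 < min a b := lt_min ha hb
  have h1 : min a b = (min a b)^C.s * (min a b)^(1-C.s) := by
    rw [← Real.rpow_add hm]; norm_num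
  rw [h1]
  apply mul_le_mul
  · exact Real.rpow_le_rpow hm.le (min_le_left _ _) C.hs0.le
  · exact Real.rpow_le_rpow hm.le (min_le_right _ _) (by linarith [C.hs1])
  · exact Real.rpow_nonneg hm.le _
  · exact Real.rpow_nonneg ha.le _

lemma increment (M : ℕ) (hM : C.M₀ ≤ M) :
    C.cm * 2^(C.s-(2:ℝ)) ≤ ∑ n ∈ Finset.Ico M (C.K*(M+1)), C.len n ^ C.s := by
  set A : ℝ := (M:ℝ)+1 with hAdef
  have hApos : (0:ℝ) < A := by positivity
  have hA1 : (1:ℝ) ≤ A := by rw [hAdef]; linarith [Nat.cast_nonneg (α:=ℝ) M]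
  set R : ℝ := C.η * A^(-(1/C.s)) with hRdef
  have hRpos : 0 < R := mul_pos C.hη0 (Real.rpow_pos_of_pos hApos _)
  have hAneg : A^(-(1/C.s)) ≤ 1 :=
    Real.rpow_le_one_of_one_le_of_nonpos hA1 (neg_nonpos.2 (le_of_lt (div_pos one_pos C.hs0)))
  have hRr : R ≤ C.r₀ := by
    calc R ≤ C.η * 1 := mul_le_mul_of_nonneg_left hAneg C.hη0.le
      _ = C.η := mul_one _
      _ ≤ C.r₀ := C.hηr
  set N : ℕ := C.K*(M+1) with hNdef
  have hMN : M ≤ N := by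
    calc M ≤ M+1 := Nat.le_succ _
      _ ≤ C.K*(M+1) := Nat.le_mul_of_pos_left _ (lt_of_lt_of_le (by norm_num) C.hK2)
  have hNM₀ : C.M₀ ≤ N := le_trans hM hMN
  have base : C.cm * R^(1-C.s) ≤ 2*R + ∑' n, min (C.len n) (2*R) :=
    (C.minkL R hRpos hRr).trans (C.geomB R hRpos)
  have split : ∑' n, min (C.len n) (2*R) =
      (∑ n ∈ Finset.range N, min (C.len n) (2*R)) + ∑' n, min (C.len (n + N)) (2*R) :=
    (Summable.sum_add_tsum_nat_add N (C.summable_min R hRpos)).symm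
  have htail : ∑' n, min (C.len (n + N)) (2*R) ≤ C.C₂ * ((N:ℝ)+1)^(-C.gam) := by
    refine le_trans (Summable.tsum_le_tsum (fun n => min_le_left _ _) ?_ ?_) (C.tail2 N (C.hM₀len N hNM₀))
    · exact (summable_nat_add_iff N).2 (C.summable_min R hRpos)
    · exact (summable_nat_add_iff N).2 C.summable_len
  have htail3 : ((N:ℝ)+1)^(-C.gam) ≤ (C.K:ℝ)^(-C.gam) * A^(-C.gam) := by
    have hKA : (C.K:ℝ) * A = ((C.K*(M+1) : ℕ) : ℝ) := by push_cast; ring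
    have hKApos : (0:ℝ) < (C.K:ℝ) * A := by
      apply mul_pos _ hApos
      exact_mod_cast (lt_of_lt_of_le (by norm_num) C.hK2 : 0 < C.K)
    have h1 : ((N:ℝ)+1)^(-C.gam) ≤ ((C.K:ℝ)*A)^(-C.gam) := by
      apply Real.rpow_le_rpow_of_nonpos hKApos _ (by linarith [C.hgam])
      rw [hKA, hNdef]; push_cast; linarith
    refine h1.trans (le_of_eq ?_)
    exact Real.mul_rpow (by positivity) hApos.le
  have hsplit_range : (∑ n ∈ Finset.range N, min (C.len n) (2*R)) =
      (∑ n ∈ Finset.range M, min (C.len n) (2*R)) + ∑ n ∈ Finset.Ico M N, min (C.len n) (2*R) := by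
    rw [Finset.range_eq_Ico, Finset.range_eq_Ico]
    exact (Finset.sum_Ico_consecutive (f := fun n => min (C.len n) (2*R)) (Nat.zero_le M) hMN).symm
  have h4 : (∑ n ∈ Finset.range M, min (C.len n) (2*R)) ≤ (M:ℝ) * (2*R) := by
    calc (∑ n ∈ Finset.range M, min (C.len n) (2*R)) ≤ ∑ _n ∈ Finset.range M, 2*R :=
          Finset.sum_le_sum (fun n _ => min_le_right _ _)
      _ = (M:ℝ) * (2*R) := by rw [Finset.sum_const, Finset.card_range, nsmul_eq_mul]
  set Q : ℝ := ∑ n ∈ Finset.Ico M N, C.len n ^ C.s with hQdef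
  have h5 : (∑ n ∈ Finset.Ico M N, min (C.len n) (2*R)) ≤ Q * (2*R)^(1-C.s) := by
    rw [hQdef, Finset.sum_mul]
    exact Finset.sum_le_sum (fun n _ => C.min_le_rpow _ _ (C.len_pos n) (by linarith))
  -- identities
  have eR : R^(1-C.s) = C.η^(1-C.s) * A^(-C.gam) := by
    rw [hRdef, Real.mul_rpow C.hη0.le (Real.rpow_nonneg hApos.le _),
      ← Real.rpow_mul hApos.le,
      show (-(1/C.s)) * (1-C.s) = -C.gam by unfold Ctx.gam; field_simp]
  have e2R : (2*R)^(1-C.s) = 2^(1-C.s) * (C.η^(1-C.s) * A^(-C.gam)) := by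
    rw [Real.mul_rpow two_pos.le hRpos.le, eR]
  have eRA : R * A = C.η * A^(-C.gam) := by
    rw [hRdef]
    have hsne : C.s ≠ 0 := C.hs0.ne'
    have : A^(-(1/C.s)) * A = A^(-(1/C.s)+1) := by
      rw [Real.rpow_add hApos, Real.rpow_one]
    rw [mul_assoc, this, show -(1/C.s)+1 = -C.gam by unfold Ctx.gam; field_simp; ring]
  -- combine
  have hP : (0:ℝ) < A^(-C.gam) := Real.rpow_pos_of_pos hApos _
  have main : C.cm * C.η^(1-C.s) * A^(-C.gam) ≤
      2*C.η*A^(-C.gam) + Q * (2^(1-C.s) * C.η^(1-C.s)) * A^(-C.gam) + C.C₂ * (C.K:ℝ)^(-C.gam) * A^(-C.gam) := by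
    have step1 : C.cm * R^(1-C.s) ≤ 2*R + ((M:ℝ)*(2*R) + Q * (2*R)^(1-C.s)) + C.C₂ * ((C.K:ℝ)^(-C.gam) * A^(-C.gam)) := by
      have hb := base
      rw [split, hsplit_range] at hb
      have ht : ∑' n, min (C.len (n + N)) (2*R) ≤ C.C₂ * ((C.K:ℝ)^(-C.gam) * A^(-C.gam)) := by
        refine htail.trans ?_
        exact mul_le_mul_of_nonneg_left htail3 C.hC₂.le
      linarith [h4, h5, ht]
    calc C.cm * C.η^(1-C.s) * A^(-C.gam) = C.cm * R^(1-C.s) := by rw [eR]; ring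
      _ ≤ 2*R + ((M:ℝ)*(2*R) + Q * (2*R)^(1-C.s)) + C.C₂ * ((C.K:ℝ)^(-C.gam) * A^(-C.gam)) := step1
      _ = 2*(R*A) + Q * (2*R)^(1-C.s) + C.C₂ * ((C.K:ℝ)^(-C.gam) * A^(-C.gam)) := by
          rw [hAdef]; ring
      _ = 2*C.η*A^(-C.gam) + Q * (2^(1-C.s) * C.η^(1-C.s)) * A^(-C.gam) + C.C₂ * (C.K:ℝ)^(-C.gam) * A^(-C.gam) := by
          rw [eRA, e2R]; ring
  have cancel : C.cm * C.η^(1-C.s) ≤ 2*C.η + Q * (2^(1-C.s) * C.η^(1-C.s)) + C.C₂ * (C.K:ℝ)^(-C.gam) := by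
    have := (mul_le_mul_iff_of_pos_right hP).1 (by
      calc C.cm * C.η^(1-C.s) * A^(-C.gam) ≤ _ := main
        _ = (2*C.η + Q * (2^(1-C.s) * C.η^(1-C.s)) + C.C₂ * (C.K:ℝ)^(-C.gam)) * A^(-C.gam) := by ring)
    exact this
  have hη2 : 2*C.η ≤ C.cm/4 * C.η^(1-C.s) := by
    have e : C.η = C.η^C.s * C.η^(1-C.s) := by rw [← Real.rpow_add C.hη0]; norm_num
    have h1 : C.η^C.s * C.η^(1-C.s) ≤ (C.cm/8) * C.η^(1-C.s) :=
      mul_le_mul_of_nonneg_right C.hηs (Real.rpow_nonneg C.hη0.le _)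
    calc 2*C.η = 2*(C.η^C.s * C.η^(1-C.s)) := by rw [← e]
      _ ≤ 2*((C.cm/8) * C.η^(1-C.s)) := by linarith
      _ = C.cm/4 * C.η^(1-C.s) := by ring
  have hfinal : C.cm/2 * C.η^(1-C.s) ≤ Q * (2^(1-C.s) * C.η^(1-C.s)) := by
    have := C.hKbound
    linarith [cancel, hη2]
  have hηpos : (0:ℝ) < C.η^(1-C.s) := Real.rpow_pos_of_pos C.hη0 _
  have h6 : C.cm/2 ≤ Q * 2^(1-C.s) := by
    have := (mul_le_mul_iff_of_pos_right hηpos).1 (by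
      calc C.cm/2 * C.η^(1-C.s) ≤ Q * (2^(1-C.s) * C.η^(1-C.s)) := hfinal
        _ = (Q * 2^(1-C.s)) * C.η^(1-C.s) := by ring)
    exact this
  have h2pos : (0:ℝ) < (2:ℝ)^(1-C.s) := Real.rpow_pos_of_pos two_pos _
  have e4 : C.cm * 2^(C.s-(2:ℝ)) * 2^(1-C.s) = C.cm/2 := by
    rw [mul_assoc, ← Real.rpow_add two_pos, show C.s-(2:ℝ)+(1-C.s) = (-1:ℝ) by ring,
      Real.rpow_neg_one]
    ring
  refine (mul_le_mul_iff_of_pos_right h2pos).1 ?_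
  rw [e4]
  exact h6

lemma S_upper (N : ℕ) (hN : 2 ≤ N) :
    ∑ n ∈ Finset.range N, C.len n ^ C.s ≤ (C.D * (1/Real.log 2 + 1)) * Real.log N := by
  have h1 : ∑ n ∈ Finset.range N, C.len n ^ C.s ≤ C.D * (harmonic N : ℝ) := by
    calc ∑ n ∈ Finset.range N, C.len n ^ C.s ≤ ∑ n ∈ Finset.range N, C.D / ((n:ℝ)+1) :=
          Finset.sum_le_sum (fun n _ => C.len_pow_le n)
      _ = C.D * ∑ n ∈ Finset.range N, (((n:ℝ)+1))⁻¹ := by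
          rw [Finset.mul_sum]
          exact Finset.sum_congr rfl fun n _ => div_eq_mul_inv _ _
      _ = C.D * (harmonic N : ℝ) := by
          congr 1
          rw [harmonic]
          push_cast
          rfl
  have h2 : (harmonic N : ℝ) ≤ 1 + Real.log N := harmonic_le_one_add_log N
  have hlog2 : (0:ℝ) < Real.log 2 := Real.log_pos (by norm_num)
  have hlogN : Real.log 2 ≤ Real.log N := by
    apply Real.log_le_log (by norm_num)
    exact_mod_cast hN
  have h3 : 1 + Real.log N ≤ (1/Real.log 2 + 1) * Real.log N := by
    have : (1:ℝ) ≤ (1/Real.log 2) * Real.log N := by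
      rw [one_div, inv_mul_eq_div, le_div_iff₀ hlog2]
      linarith
    linarith
  calc ∑ n ∈ Finset.range N, C.len n ^ C.s ≤ C.D * (harmonic N : ℝ) := h1
    _ ≤ C.D * ((1/Real.log 2 + 1) * Real.log N) := by
        apply mul_le_mul_of_nonneg_left (h2.trans h3) C.hD.le
    _ = (C.D * (1/Real.log 2 + 1)) * Real.log N := by ring

lemma S_lower : ∃ c' : ℝ, 0 < c' ∧ ∀ N : ℕ, 2 ≤ N →
    c' * Real.log N ≤ ∑ n ∈ Finset.range N, C.len n ^ C.s := by
  set δ : ℝ := C.cm * 2^(C.s-(2:ℝ)) with hδdef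
  have hδ : 0 < δ := mul_pos C.hcm (Real.rpow_pos_of_pos two_pos _)
  set S : ℕ → ℝ := fun N => ∑ n ∈ Finset.range N, C.len n ^ C.s with hSdef
  have hSmono : ∀ {M N : ℕ}, M ≤ N → S M ≤ S N := by
    intro M N h
    apply Finset.sum_le_sum_of_subset_of_nonneg (Finset.range_subset_range.2 h)
    intro n _ _
    exact Real.rpow_nonneg (C.len_pos n).le _
  have hKpos : 0 < C.K := lt_of_lt_of_le (by norm_num) C.hK2
  have hM₀pos : 0 < C.M₀ := by unfold Ctx.M₀; omega
  -- the iterated sequence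
  set g : ℕ → ℕ := fun j => Nat.rec C.M₀ (fun _ m => C.K*(m+1)) j with hgdef
  have hg0 : g 0 = C.M₀ := rfl
  have hgsucc : ∀ j, g (j+1) = C.K * (g j + 1) := fun j => rfl
  have hgM₀ : ∀ j, C.M₀ ≤ g j := by
    intro j
    induction j with
    | zero => exact le_rfl
    | succ j ih =>
      rw [hgsucc]
      calc C.M₀ ≤ g j := ih
        _ ≤ C.K * (g j + 1) := by nlinarith
  have hgS : ∀ j : ℕ, (j:ℝ) * δ ≤ S (g j) := by
    intro j
    induction j with
    | zero =>
      simp only [Nat.cast_zero, zero_mul]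
      exact Finset.sum_nonneg (fun n _ => Real.rpow_nonneg (C.len_pos n).le _)
    | succ j ih =>
      have hinc := C.increment (g j) (hgM₀ j)
      have hsp : S (g (j+1)) = S (g j) + ∑ n ∈ Finset.Ico (g j) (C.K*(g j+1)), C.len n ^ C.s := by
        rw [hSdef]
        simp only [hgsucc j]
        rw [Finset.range_eq_Ico, Finset.range_eq_Ico]
        exact (Finset.sum_Ico_consecutive (f := fun n => C.len n ^ C.s) (Nat.zero_le _)
          (by nlinarith : g j ≤ C.K * (g j + 1))).symm
      rw [hsp]
      push_cast
      rw [← hδdef] at hinc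
      linarith
  have hgle : ∀ j, g j ≤ C.M₀ * (2*C.K)^j := by
    intro j
    induction j with
    | zero => simp [hg0]
    | succ j ih =>
      rw [hgsucc, pow_succ]
      have h1 : 1 ≤ g j := le_trans hM₀pos (hgM₀ j)
      calc C.K * (g j + 1) ≤ C.K * (g j + g j) := by nlinarith
        _ = g j * (2*C.K) := by ring
        _ ≤ (C.M₀ * (2*C.K)^j) * (2*C.K) := by nlinarith [pow_pos (by omega : 0 < 2*C.K) j]
        _ = C.M₀ * ((2*C.K)^j * (2*C.K)) := by ring
  -- constants
  set L : ℝ := Real.log (2*C.K) with hLdef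
  have hL : 0 < L := Real.log_pos (by exact_mod_cast (by omega : (1:ℕ) < 2*C.K))
  have hlogM₀ : (0:ℝ) ≤ Real.log C.M₀ := Real.log_natCast_nonneg _
  set Θ : ℝ := 2*(Real.log C.M₀ + L) with hΘdef
  have hΘpos : 0 < Θ := by rw [hΘdef]; linarith
  set α : ℝ := C.len 0 ^ C.s with hαdef
  have hα : 0 < α := Real.rpow_pos_of_pos (C.len_pos 0) _
  refine ⟨min (δ/(2*L)) (α/Θ), lt_min (by positivity) (by positivity), ?_⟩
  intro N hN
  have hlogN : 0 < Real.log N := Real.log_pos (by exact_mod_cast (by omega : (1:ℕ) < N))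
  have hSα : α ≤ S N := by
    rw [hαdef, hSdef]
    apply Finset.single_le_sum (f := fun n => C.len n ^ C.s)
      (fun n _ => Real.rpow_nonneg (C.len_pos n).le _)
    simp; omega
  rcases le_or_gt (Real.log N) Θ with hcase | hcase
  · -- small N
    calc min (δ/(2*L)) (α/Θ) * Real.log N ≤ (α/Θ) * Real.log N := by
          apply mul_le_mul_of_nonneg_right (min_le_right _ _) hlogN.le
      _ ≤ (α/Θ) * Θ := by
          apply mul_le_mul_of_nonneg_left hcase (by positivity)
      _ = α := by field_simp
      _ ≤ S N := hSα
  · -- large N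
    have hM₀N : C.M₀ ≤ N := by
      by_contra hc
      push_neg at hc
      have h1 : Real.log N ≤ Real.log C.M₀ := by
        apply Real.log_le_log (by exact_mod_cast (by omega : (0:ℕ) < N))
        exact_mod_cast hc.le
      rw [hΘdef] at hcase
      linarith
    set j : ℕ := Nat.log (2*C.K) (N / C.M₀) with hjdef
    have hNdiv : 1 ≤ N / C.M₀ := (Nat.one_le_div_iff hM₀pos).2 hM₀N
    have hgj : g j ≤ N := by
      calc g j ≤ C.M₀ * (2*C.K)^j := hgle j
        _ ≤ C.M₀ * (N / C.M₀) := by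
            apply Nat.mul_le_mul_left
            exact Nat.pow_log_le_self (2*C.K) (by omega)
        _ = (N / C.M₀) * C.M₀ := by ring
        _ ≤ N := Nat.div_mul_le_self _ _
    have hjlb : Real.log N ≤ Real.log C.M₀ + ((j:ℝ)+1) * L := by
      have h1 : N / C.M₀ < (2*C.K)^(j+1) := Nat.lt_pow_succ_log_self (by omega) _
      have h2 : N < C.M₀ * (2*C.K)^(j+1) := by
        calc N < C.M₀ * (N / C.M₀ + 1) := Nat.lt_mul_div_succ N hM₀pos
          _ ≤ C.M₀ * (2*C.K)^(j+1) := Nat.mul_le_mul_left _ (by omega)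
      have h3 : (N:ℝ) ≤ (C.M₀:ℝ) * ((2*C.K:ℕ):ℝ)^(j+1) := by exact_mod_cast h2.le
      have h4 : Real.log N ≤ Real.log ((C.M₀:ℝ) * ((2*C.K:ℕ):ℝ)^(j+1)) := by
        apply Real.log_le_log (by exact_mod_cast (by omega : (0:ℕ) < N)) h3
      rw [Real.log_mul (by exact_mod_cast hM₀pos.ne') (by positivity),
        Real.log_pow] at h4
      rw [hLdef]
      push_cast at h4 ⊢
      linarith [h4]
    have hjS : ((j:ℝ)) * δ ≤ S N := le_trans (hgS j) (hSmono hgj)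
    have hjge : (Real.log N - Real.log C.M₀)/L - 1 ≤ (j:ℝ) := by
      have h5 : (Real.log N - Real.log C.M₀)/L ≤ (j:ℝ)+1 := by
        rw [div_le_iff₀ hL]; linarith
      linarith
    calc min (δ/(2*L)) (α/Θ) * Real.log N ≤ (δ/(2*L)) * Real.log N := by
          apply mul_le_mul_of_nonneg_right (min_le_left _ _) hlogN.le
      _ ≤ ((Real.log N - Real.log C.M₀)/L - 1) * δ := by
          rw [hΘdef] at hcase
          have e : (Real.log N - Real.log C.M₀)/L - 1 = (Real.log N - Real.log C.M₀ - L)/L := by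
            field_simp
          have key : Real.log N / (2*L) ≤ (Real.log N - Real.log C.M₀)/L - 1 := by
            rw [e, div_le_div_iff₀ (by linarith : (0:ℝ) < 2*L) hL]
            nlinarith [mul_pos hL (show (0:ℝ) < Real.log N - 2*Real.log C.M₀ - 2*L by linarith)]
          calc (δ/(2*L)) * Real.log N = δ * (Real.log N/(2*L)) := by ring
            _ ≤ δ * ((Real.log N - Real.log C.M₀)/L - 1) :=
                mul_le_mul_of_nonneg_left key hδ.le
            _ = ((Real.log N - Real.log C.M₀)/L - 1) * δ := by ring
      _ ≤ (j:ℝ) * δ := by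
          apply mul_le_mul_of_nonneg_right hjge hδ.le
      _ ≤ S N := hjS

end Ctx

/-- if `F` is almost `s`-Minkowski measurable then the partial sums
`Σ_{n<N} |I_n|^s` are comparable to `log N`. -/
theorem stmt_1 (F : Set ℝ) (hF : IsFractalSubset F) (c : FractalComplement F)
    (s : ℝ) (hs0 : 0 < s) (hs1 : s < 1)
    (cm CM r₀ : ℝ) (hcm : 0 < cm) (hcmCM : cm ≤ CM) (hr₀ : 0 < r₀)
    (hmink : ∀ R : ℝ, 0 < R → R ≤ r₀ →
      cm * R ^ (1 - s) ≤ (MeasureTheory.volume (Metric.cthickening R F)).toReal ∧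
      (MeasureTheory.volume (Metric.cthickening R F)).toReal ≤ CM * R ^ (1 - s)) :
    ∃ c' C' : ℝ, 0 < c' ∧ c' ≤ C' ∧ ∀ N : ℕ, 2 ≤ N →
      c' * Real.log N ≤ ∑ n ∈ Finset.range N, c.len n ^ s ∧
      ∑ n ∈ Finset.range N, c.len n ^ s ≤ C' * Real.log N := by
  set C : Ctx :=
    { F := F
      len := c.len
      len_pos := Frac.len_pos c
      len_anti := fun {m n} h => Frac.len_anti c h
      sum_len_le_one := fun t => Frac.sum_len_le_one c t
      summable_len := Frac.summable_len c
      s := s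
      hs0 := hs0
      hs1 := hs1
      cm := cm
      CM := CM
      r₀ := r₀
      hcm := hcm
      hCM := lt_of_lt_of_le hcm hcmCM
      hr₀ := hr₀
      minkU := fun R h1 h2 => (hmink R h1 h2).2
      minkL := fun R h1 h2 => (hmink R h1 h2).1
      geomA := Frac.geomA hF c
      geomB := Frac.geomB hF c
      summable_min := Frac.summable_min c } with hC
  obtain ⟨c', hc', hlow⟩ := C.S_lower
  set CU : ℝ := C.D * (1/Real.log 2 + 1) with hCU
  have hlog2 : (0:ℝ) < Real.log 2 := Real.log_pos (by norm_num)
  have hCUpos : 0 < CU := by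
    rw [hCU]
    apply mul_pos C.hD
    positivity
  refine ⟨min c' CU, max c' CU, lt_min hc' hCUpos,
    (min_le_left _ _).trans (le_max_left _ _), fun N hN => ⟨?_, ?_⟩⟩
  · have hlogN : 0 ≤ Real.log N := Real.log_natCast_nonneg N
    calc min c' CU * Real.log N ≤ c' * Real.log N :=
          mul_le_mul_of_nonneg_right (min_le_left _ _) hlogN
      _ ≤ ∑ n ∈ Finset.range N, c.len n ^ s := hlow N hN
  · have hlogN : 0 ≤ Real.log N := Real.log_natCast_nonneg N
    calc ∑ n ∈ Finset.range N, c.len n ^ s ≤ CU * Real.log N := C.S_upper N hN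
      _ ≤ max c' CU * Real.log N :=
          mul_le_mul_of_nonneg_right (le_max_right _ _) hlogN
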